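/- arXiv:2110.02195 — 2 statements merged into one kernel-verified Lean document; each statement's English description precedes it below -/
import Mathlib

section
/- For p ≥ 2 and l ≥ 2 integers, let (x_j)_{j∈[l]} be integers in [0, p], and let c₁, c₂, c₃ ∈ [0, p] be integers satisfying: (c₂ ≤ c₁ or c₃ = 0), c₁ + c₃ ≤ p, c₁ + c₂ + c₃ ≤ Σ_{j∈[l]} x_j, c₂ ≤ Σ_{j=2}^{l} x_j, and c₁ ≤ x₁. Then ∏_{j∈[l]} g(x_j) ≤ g(c₁ + c₃) · g(c₂). -/
noncomputable def gg (p n : ℕ) : ℝ :=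
  1 - (n : ℝ) / p + (n : ℝ) * ((n : ℝ) - 1) / (2 * (p : ℝ) ^ 2)

lemma gg_eq (p n : ℕ) (hp : 2 ≤ p) :
    gg p n = (2 * (p : ℝ) ^ 2 - 2 * p * n + n * ((n : ℝ) - 1)) / (2 * (p : ℝ) ^ 2) := by
  have hp0 : (p : ℝ) ≠ 0 := Nat.cast_ne_zero.2 (by omega)
  unfold gg
  field_simp

lemma gg_zero (p : ℕ) : gg p 0 = 1 := by simp [gg]

lemma gg_pos (p n : ℕ) (hp : 2 ≤ p) (hn : n ≤ p) : 0 < gg p n := by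
  rw [gg_eq p n hp]
  have hp' : (2 : ℝ) ≤ p := by exact_mod_cast hp
  have hn' : (n : ℝ) ≤ p := by exact_mod_cast hn
  have hn0 : (0 : ℝ) ≤ n := Nat.cast_nonneg n
  apply div_pos
  · nlinarith [sq_nonneg ((p : ℝ) - n)]
  · positivity

lemma gg_mono (p a b : ℕ) (hp : 2 ≤ p) (hab : a ≤ b) (hb : b ≤ p) : gg p b ≤ gg p a := by
  rw [gg_eq p a hp, gg_eq p b hp]
  have hp' : (2 : ℝ) ≤ p := by exact_mod_cast hp
  have hb' : (b : ℝ) ≤ p := by exact_mod_cast hb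
  have hab' : (a : ℝ) ≤ b := by exact_mod_cast hab
  have ha0 : (0 : ℝ) ≤ a := Nat.cast_nonneg a
  rw [div_le_div_iff₀ (by positivity) (by positivity)]
  nlinarith [mul_nonneg (sub_nonneg.2 hab')
    (by nlinarith : (0:ℝ) ≤ 2 * (p:ℝ) - a - b + 1)]

lemma gg_super (p a b : ℕ) (hp : 2 ≤ p) (hab : a + b ≤ p) :
    gg p a * gg p b ≤ gg p (a + b) := by
  rcases Nat.eq_zero_or_pos a with ha | ha
  · subst ha; rw [gg_zero]; simp
  rcases Nat.eq_zero_or_pos b with hb | hb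
  · subst hb; rw [gg_zero]; simp
  have hp' : (2 : ℝ) ≤ p := by exact_mod_cast hp
  have ha' : (1 : ℝ) ≤ a := by exact_mod_cast ha
  have hb' : (1 : ℝ) ≤ b := by exact_mod_cast hb
  have hab' : (a : ℝ) + b ≤ p := by exact_mod_cast hab
  rw [gg_eq p a hp, gg_eq p b hp, gg_eq p (a + b) hp]
  rw [div_mul_div_comm, div_le_div_iff₀ (by positivity) (by positivity)]
  push_cast
  have key : (0 : ℝ) ≤ 2 * p * ((a : ℝ) + b - 2) - ((a : ℝ) - 1) * ((b : ℝ) - 1) := by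
    nlinarith [mul_nonneg (sub_nonneg.2 hb')
      (by nlinarith : (0:ℝ) ≤ 2 * (p:ℝ) - ((a:ℝ) - 1))]
  have h := mul_nonneg (mul_nonneg (mul_nonneg
      (by positivity : (0:ℝ) ≤ 2 * (p:ℝ) ^ 2)
      (by positivity : (0:ℝ) ≤ (a:ℝ))) (by positivity : (0:ℝ) ≤ (b:ℝ))) key
  nlinarith [h]

lemma gg_step (p k m : ℕ) (hp : 2 ≤ p) (hkm : k < m) (hm : m + 1 ≤ p) :
    gg p (k + 1) * gg p m ≤ gg p k * gg p (m + 1) := by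
  have hp' : (2 : ℝ) ≤ p := by exact_mod_cast hp
  have hkm' : (k : ℝ) + 1 ≤ m := by exact_mod_cast hkm
  have hm' : (m : ℝ) + 1 ≤ p := by exact_mod_cast hm
  have hk0 : (0 : ℝ) ≤ k := Nat.cast_nonneg k
  rw [gg_eq p k hp, gg_eq p m hp, gg_eq p (k + 1) hp, gg_eq p (m + 1) hp]
  rw [div_mul_div_comm, div_mul_div_comm, div_le_div_iff₀ (by positivity) (by positivity)]
  push_cast
  have key : (0 : ℝ) ≤ (p : ℝ) * ((k : ℝ) + m - 1) - k * m := by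
    rcases Nat.eq_zero_or_pos k with hk | hk
    · subst hk; push_cast; nlinarith
    · have hk1 : (1 : ℝ) ≤ k := by exact_mod_cast hk
      nlinarith [mul_nonneg (sub_nonneg.2 (by nlinarith : (k:ℝ) ≤ p))
        (by nlinarith : (0:ℝ) ≤ (m:ℝ))]
  have D0 : (0:ℝ) ≤ 2 * (p:ℝ)^2 * (2 * (p:ℝ)^2) := by positivity
  nlinarith [mul_nonneg (mul_nonneg D0 (sub_nonneg.2 (by linarith : (k:ℝ) ≤ m))) key]

lemma gg_swap (p : ℕ) (hp : 2 ≤ p) (u v : ℕ) (hv : v ≤ p) :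
    ∀ n s t, min s t - u ≤ n → u ≤ s → u ≤ t → s + t = u + v →
      gg p s * gg p t ≤ gg p u * gg p v := by
  intro n
  induction n with
  | zero =>
    intro s t h hus hut hsum
    rcases (by omega : s = u ∧ t = v ∨ t = u ∧ s = v) with ⟨h1, h2⟩ | ⟨h1, h2⟩
    · subst h1; subst h2; exact le_rfl
    · subst h1; subst h2; rw [mul_comm]
  | succ n ih =>
    intro s t h hus hut hsum
    rcases le_total s t with hst | hst
    · rcases Nat.eq_or_lt_of_le hus with hsu | hsu
      · have htv : t = v := by omega
        subst htv; rw [← hsu]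
      · have h1 : s - 1 < t := by omega
        have h2 : t + 1 ≤ p := by omega
        calc gg p s * gg p t = gg p ((s - 1) + 1) * gg p t := by
              rw [Nat.sub_add_cancel (by omega)]
          _ ≤ gg p (s - 1) * gg p (t + 1) := gg_step p (s - 1) t hp h1 h2
          _ ≤ gg p u * gg p v := ih (s - 1) (t + 1) (by omega) (by omega) (by omega) (by omega)
    · rcases Nat.eq_or_lt_of_le hut with htu | htu
      · have hsv : s = v := by omega
        subst hsv; rw [← htu, mul_comm]
      · have h1 : t - 1 < s := by omega
        have h2 : s + 1 ≤ p := by omega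
        calc gg p s * gg p t = gg p ((t - 1) + 1) * gg p s := by
              rw [Nat.sub_add_cancel (by omega), mul_comm]
          _ ≤ gg p (t - 1) * gg p (s + 1) := gg_step p (t - 1) s hp h1 h2
          _ = gg p (s + 1) * gg p (t - 1) := mul_comm _ _
          _ ≤ gg p u * gg p v := ih (s + 1) (t - 1) (by omega) (by omega) (by omega) (by omega)

lemma gg_comb (p a b : ℕ) (hp : 2 ≤ p) (ha : a ≤ p) (hb : b ≤ p) :
    gg p a * gg p b ≤ gg p (min (a + b) p) := by
  rcases le_or_gt (a + b) p with h | h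
  · rw [min_eq_left h]; exact gg_super p a b hp h
  · rw [min_eq_right (by omega)]
    have h1 : gg p a ≤ gg p (p - b) := gg_mono p (p - b) a hp (by omega) ha
    calc gg p a * gg p b ≤ gg p (p - b) * gg p b :=
          mul_le_mul_of_nonneg_right h1 (gg_pos p b hp hb).le
      _ ≤ gg p ((p - b) + b) := gg_super p (p - b) b hp (by omega)
      _ = gg p p := by rw [Nat.sub_add_cancel (by omega)]

lemma gg_prod {ι : Type*} (p : ℕ) (hp : 2 ≤ p) (s : Finset ι) (x : ι → ℕ)
    (hx : ∀ j ∈ s, x j ≤ p) :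
    ∏ j ∈ s, gg p (x j) ≤ gg p (min (∑ j ∈ s, x j) p) := by
  induction s using Finset.cons_induction with
  | empty => simp [gg_zero]
  | cons a s has ih =>
    rw [Finset.prod_cons, Finset.sum_cons]
    have hxa : x a ≤ p := hx a (Finset.mem_cons_self a s)
    have ih' := ih (fun j hj => hx j (Finset.mem_cons_of_mem hj))
    calc gg p (x a) * ∏ j ∈ s, gg p (x j)
        ≤ gg p (x a) * gg p (min (∑ j ∈ s, x j) p) :=
          mul_le_mul_of_nonneg_left ih' (gg_pos p (x a) hp hxa).le
      _ ≤ gg p (min (x a + min (∑ j ∈ s, x j) p) p) :=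
          gg_comb p (x a) _ hp hxa (min_le_right _ _)
      _ ≤ gg p (min (x a + ∑ j ∈ s, x j) p) :=
          gg_mono p _ _ hp (by omega) (min_le_right _ _)

lemma gg_two (p a b c₁ c₂ c₃ : ℕ) (hp : 2 ≤ p) (ha : a ≤ p) (hb : b ≤ p)
    (h1a : c₁ ≤ a) (h2b : c₂ ≤ b) (hsum : c₁ + c₂ + c₃ ≤ a + b)
    (h13 : c₁ + c₃ ≤ p) (hc2 : c₂ ≤ p) (hcase : c₂ ≤ c₁ ∨ c₃ = 0) :
    gg p a * gg p b ≤ gg p (c₁ + c₃) * gg p c₂ := by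
  rcases le_or_gt (c₁ + c₃) a with hca | hca
  · exact mul_le_mul (gg_mono p (c₁ + c₃) a hp hca ha) (gg_mono p c₂ b hp h2b hb)
      (gg_pos p b hp hb).le (gg_pos p (c₁ + c₃) hp h13).le
  · have hc21 : c₂ ≤ c₁ := by rcases hcase with h | h; exact h; omega
    set b' := c₁ + c₂ + c₃ - a with hb'
    have hab' : a + b' = c₂ + (c₁ + c₃) := by omega
    calc gg p a * gg p b ≤ gg p a * gg p b' :=
          mul_le_mul_of_nonneg_left (gg_mono p b' b hp (by omega) hb) (gg_pos p a hp ha).le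
      _ ≤ gg p c₂ * gg p (c₁ + c₃) :=
          gg_swap p hp c₂ (c₁ + c₃) h13 (a + b') a b' (by omega) (by omega) (by omega) hab'
      _ = gg p (c₁ + c₃) * gg p c₂ := mul_comm _ _

/-- Product optimization lemma for `g(x) = 1 - x/p + x(x-1)/(2p²)`:
under the stated integer constraints,
`∏_{j∈[l]} g(x_j) ≤ g(c₁ + c₃) · g(c₂)`. -/
theorem prod_g_le (p l : ℕ) (hp : 2 ≤ p) (hl : 2 ≤ l)
    (x : Fin l → ℕ) (hx : ∀ j, x j ≤ p)
    (c₁ c₂ c₃ : ℕ) (hc₁ : c₁ ≤ p) (hc₂ : c₂ ≤ p) (hc₃ : c₃ ≤ p)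
    (h1 : c₂ ≤ c₁ ∨ c₃ = 0)
    (h2 : c₁ + c₃ ≤ p)
    (h3 : c₁ + c₂ + c₃ ≤ ∑ j, x j)
    (h4 : c₂ ≤ ∑ j ∈ Finset.univ.filter (fun j : Fin l => (j : ℕ) ≠ 0), x j)
    (h5 : c₁ ≤ x ⟨0, by omega⟩) :
    (∏ j, (1 - (x j : ℝ) / p + (x j : ℝ) * ((x j : ℝ) - 1) / (2 * (p : ℝ) ^ 2)))
      ≤ (1 - ((c₁ + c₃ : ℕ) : ℝ) / p
            + ((c₁ + c₃ : ℕ) : ℝ) * (((c₁ + c₃ : ℕ) : ℝ) - 1) / (2 * (p : ℝ) ^ 2))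
        * (1 - (c₂ : ℝ) / p + (c₂ : ℝ) * ((c₂ : ℝ) - 1) / (2 * (p : ℝ) ^ 2)) := by
  have hl0 : 0 < l := by omega
  set i0 : Fin l := ⟨0, hl0⟩ with hi0
  have h5' : c₁ ≤ x i0 := h5
  have hfilter : Finset.univ.filter (fun j : Fin l => ¬ (j : ℕ) ≠ 0) = {i0} := by
    ext j
    simp [Finset.mem_filter, Finset.mem_singleton, hi0, Fin.ext_iff]
  have hsum : ∑ j, x j
      = (∑ j ∈ Finset.univ.filter (fun j : Fin l => (j : ℕ) ≠ 0), x j) + x i0 := by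
    rw [← Finset.sum_filter_add_sum_filter_not Finset.univ (fun j : Fin l => (j : ℕ) ≠ 0) x,
      hfilter, Finset.sum_singleton]
  have hprod : ∏ j, gg p (x j)
      = (∏ j ∈ Finset.univ.filter (fun j : Fin l => (j : ℕ) ≠ 0), gg p (x j)) * gg p (x i0) := by
    rw [← Finset.prod_filter_mul_prod_filter_not Finset.univ (fun j : Fin l => (j : ℕ) ≠ 0)
      (fun j => gg p (x j)), hfilter, Finset.prod_singleton]
  set T := ∑ j ∈ Finset.univ.filter (fun j : Fin l => (j : ℕ) ≠ 0), x j with hT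
  have hmain : ∏ j, gg p (x j) ≤ gg p (c₁ + c₃) * gg p c₂ := by
    rw [hprod]
    have step1 : (∏ j ∈ Finset.univ.filter (fun j : Fin l => (j : ℕ) ≠ 0), gg p (x j))
        ≤ gg p (min T p) :=
      gg_prod p hp _ x (fun j _ => hx j)
    calc (∏ j ∈ Finset.univ.filter (fun j : Fin l => (j : ℕ) ≠ 0), gg p (x j)) * gg p (x i0)
        ≤ gg p (min T p) * gg p (x i0) :=
          mul_le_mul_of_nonneg_right step1 (gg_pos p (x i0) hp (hx i0)).le
      _ = gg p (x i0) * gg p (min T p) := mul_comm _ _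
      _ ≤ gg p (c₁ + c₃) * gg p c₂ := by
          apply gg_two p (x i0) (min T p) c₁ c₂ c₃ hp (hx i0) (min_le_right _ _) h5'
            (le_min h4 hc₂) _ h2 hc₂ h1
          rcases h1 with h | h <;> omega
  simpa only [gg] using hmain
end

section
/- Suppose x₁ ≥ c₁ ≥ 0, y ≥ c₂ ≥ 0, x₁ + y ≥ c₁ + c₂ + c₃, all lying in [0, p], with either c₃ = 0 or c₂ ≤ c₁, and c₁ + c₃ ≤ p. If u : [0,p] → ℝ is decreasing and convex, then u(x₁) + u(y) ≤ u(c₁ + c₃) + u(c₂). -/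
/-- Two-variable core of the product optimization lemma: for integers
`x₁ ≥ c₁ ≥ 0`, `y ≥ c₂ ≥ 0` in `[0,p]` with `x₁ + y ≥ c₁ + c₂ + c₃`,
`(c₃ = 0 or c₂ ≤ c₁)`, `c₁ + c₃ ≤ p`, and `u` decreasing and convex on `[0,p]`,
we have `u(x₁) + u(y) ≤ u(c₁+c₃) + u(c₂)`. -/
theorem two_var_opt (p : ℝ) (hp : 2 ≤ p)
    (x₁ y c₁ c₂ c₃ : ℕ)
    (hx₁p : (x₁ : ℝ) ≤ p) (hyp : (y : ℝ) ≤ p)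
    (hc₁p : (c₁ : ℝ) ≤ p) (hc₂p : (c₂ : ℝ) ≤ p) (hc₃p : (c₃ : ℝ) ≤ p)
    (hx₁ : c₁ ≤ x₁) (hy : c₂ ≤ y)
    (hsum : c₁ + c₂ + c₃ ≤ x₁ + y)
    (hcase : c₃ = 0 ∨ c₂ ≤ c₁)
    (hc₁₃ : ((c₁ : ℝ) + c₃) ≤ p)
    (u : ℝ → ℝ)
    (hanti : AntitoneOn u (Set.Icc (0 : ℝ) p))
    (hconv : ConvexOn ℝ (Set.Icc (0 : ℝ) p) u) :
    u x₁ + u y ≤ u ((c₁ : ℝ) + c₃) + u c₂ := by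
  set a : ℝ := (c₁ : ℝ) + c₃ with ha
  set b : ℝ := (c₂ : ℝ) with hb
  have hb0 : (0:ℝ) ≤ b := Nat.cast_nonneg _
  have hx0 : (0:ℝ) ≤ (x₁:ℝ) := Nat.cast_nonneg _
  have hy0 : (0:ℝ) ≤ (y:ℝ) := Nat.cast_nonneg _
  have hc₃0 : (0:ℝ) ≤ (c₃:ℝ) := Nat.cast_nonneg _
  have hc₁0 : (0:ℝ) ≤ (c₁:ℝ) := Nat.cast_nonneg _
  have ha0 : (0:ℝ) ≤ a := by positivity
  have hsumR : (c₁:ℝ) + c₂ + c₃ ≤ (x₁:ℝ) + y := by exact_mod_cast hsum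
  have hx₁R : (c₁:ℝ) ≤ x₁ := by exact_mod_cast hx₁
  have hyR : b ≤ y := by rw [hb]; exact_mod_cast hy
  have h2' : u (y:ℝ) ≤ u b := hanti ⟨hb0, hc₂p⟩ ⟨hy0, hyp⟩ hyR
  by_cases hcase2 : a ≤ (x₁:ℝ)
  · have h1 : u (x₁:ℝ) ≤ u a := hanti ⟨ha0, hc₁₃⟩ ⟨hx0, hx₁p⟩ hcase2
    linarith
  · push_neg at hcase2
    have hc₂₁ : b ≤ (c₁:ℝ) := by
      rcases hcase with h | h
      · exfalso
        have : (c₃:ℝ) = 0 := by exact_mod_cast h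
        have : a = (c₁:ℝ) := by rw [ha, this, add_zero]
        linarith
      · rw [hb]; exact_mod_cast h
    have hbx : b ≤ (x₁:ℝ) := le_trans hc₂₁ hx₁R
    have hba : b < a := lt_of_le_of_lt hbx hcase2
    have hz0 : (0:ℝ) ≤ a + b - x₁ := by linarith
    have hzp : a + b - x₁ ≤ p := by linarith
    have hy2 : a + b - (x₁:ℝ) ≤ y := by
      have : a + b = (c₁:ℝ) + c₂ + c₃ := by rw [ha, hb]; ring
      linarith
    have h2 : u (y:ℝ) ≤ u (a + b - x₁) := hanti ⟨hz0, hzp⟩ ⟨hy0, hyp⟩ hy2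
    set t : ℝ := (a - x₁) / (a - b) with htdef
    have hab : (0:ℝ) < a - b := by linarith
    have ht0 : 0 ≤ t := div_nonneg (by linarith) (le_of_lt hab)
    have ht1 : t ≤ 1 := by
      rw [htdef, div_le_one hab]; linarith
    have hmemb : b ∈ Set.Icc (0:ℝ) p := ⟨hb0, hc₂p⟩
    have hmema : a ∈ Set.Icc (0:ℝ) p := ⟨ha0, hc₁₃⟩
    have key1 := hconv.2 hmemb hmema ht0 (by linarith : (0:ℝ) ≤ 1 - t) (by ring)
    have key2 := hconv.2 hmemb hmema (by linarith : (0:ℝ) ≤ 1 - t) ht0 (by ring)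
    have habne : a - b ≠ 0 := ne_of_gt hab
    have e1 : t • b + (1 - t) • a = (x₁:ℝ) := by
      simp only [smul_eq_mul, htdef]; field_simp; ring
    have e2 : (1 - t) • b + t • a = a + b - x₁ := by
      simp only [smul_eq_mul, htdef]; field_simp; ring
    rw [e1] at key1
    rw [e2] at key2
    simp only [smul_eq_mul] at key1 key2
    linarith
end
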